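/- arXiv:1404.6960 — 4 statements merged into one kernel-verified Lean document; each statement's English description precedes it below -/
import Mathlib

section
/- Suppose p⁻¹ < q₁ < q₂ < ... < q_d ≤ 1 and let N(z) = max_i(qᵢ|zᵢ|_p). Then for each j = 0,...,d, the set B_j = ℤ_p^j × (pℤ_p)^{d-j} equals the closed N-ball of radius q_j centered at 0 (with the convention that B_0 = pℤ_p^d is the ball of radius q_d/p). In particular, pℤ_p^d = B_0 ⊂ B_1 ⊂ ... ⊂ B_d = ℤ_p^d is a chain of d+1 distinct N-balls. -/
/-- The norm `N_{q₁,…,q_d}(z) = max_i qᵢ |zᵢ|_p` on `ℚ_p^d`. -/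
noncomputable def padicN (p : ℕ) [Fact p.Prime] {d : ℕ} (q : Fin d → ℝ)
    (z : Fin d → ℚ_[p]) : ℝ :=
  ⨆ i, q i * ‖z i‖

/-- `ballB p j` is `ℤ_p^j × (pℤ_p)^{d-j}`: vectors whose first `j` coordinates are
p-adic integers and remaining coordinates lie in `pℤ_p`. -/
def ballB (p : ℕ) [Fact p.Prime] (d : ℕ) (j : ℕ) : Set (Fin d → ℚ_[p]) :=
  {z | ∀ i : Fin d, if (i : ℕ) < j then ‖z i‖ ≤ 1 else ‖z i‖ ≤ (p : ℝ)⁻¹}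

lemma padic_norm_le_inv_iff {p : ℕ} [Fact p.Prime] (x : ℚ_[p]) :
    ‖x‖ ≤ (p : ℝ)⁻¹ ↔ ‖x‖ < 1 := by
  have := Padic.norm_le_pow_iff_norm_lt_pow_add_one x (-1)
  simpa using this

lemma padic_norm_le_one_iff {p : ℕ} [Fact p.Prime] (x : ℚ_[p]) :
    ‖x‖ ≤ 1 ↔ ‖x‖ < p := by
  have := Padic.norm_le_pow_iff_norm_lt_pow_add_one x 0
  simpa using this

theorem ballB_chain (p : ℕ) [Fact p.Prime] (d : ℕ) (hd : 0 < d) (q : Fin d → ℝ)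
    (hq₁ : ∀ i, (p : ℝ)⁻¹ < q i) (hq₂ : ∀ i, q i ≤ 1) (hmono : StrictMono q) :
    (∀ j : Fin d, ballB p d ((j : ℕ) + 1) = {z | padicN p q z ≤ q j}) ∧
    (ballB p d 0 = {z | padicN p q z ≤ q ⟨d - 1, Nat.sub_lt hd one_pos⟩ / p}) ∧
    (∀ j : ℕ, j < d → ballB p d j ⊂ ballB p d (j + 1)) := by
  haveI : Nonempty (Fin d) := ⟨⟨0, hd⟩⟩
  have hp1 : (1 : ℝ) < p := by exact_mod_cast (Fact.out : p.Prime).one_lt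
  have hp0 : (0 : ℝ) < p := lt_trans one_pos hp1
  have hpinv : (p : ℝ)⁻¹ < 1 := by
    rw [inv_lt_one_iff₀]; right; exact hp1
  have hpinv0 : (0 : ℝ) < (p : ℝ)⁻¹ := inv_pos.mpr hp0
  have hq0 : ∀ i, 0 < q i := fun i => lt_trans hpinv0 (hq₁ i)
  have hbdd : ∀ z : Fin d → ℚ_[p], BddAbove (Set.range fun i => q i * ‖z i‖) :=
    fun z => (Set.finite_range _).bddAbove
  refine ⟨?_, ?_, ?_⟩
  · intro j
    ext z
    simp only [ballB, padicN, Set.mem_setOf_eq]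
    constructor
    · intro h
      apply ciSup_le
      intro i
      have hi := h i
      by_cases hij : (i : ℕ) < (j : ℕ) + 1
      · rw [if_pos hij] at hi
        have : q i ≤ q j := hmono.monotone (by omega : i ≤ j)
        nlinarith [hq0 i, norm_nonneg (z i)]
      · rw [if_neg hij] at hi
        have : q j ≤ 1 := hq₂ j
        nlinarith [hq0 i, norm_nonneg (z i), hq₁ j, hq₂ i]
    · intro h i
      have hle : q i * ‖z i‖ ≤ q j := le_trans (le_ciSup (hbdd z) i) h
      by_cases hij : (i : ℕ) < (j : ℕ) + 1
      · rw [if_pos hij]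
        by_contra hcon
        rw [padic_norm_le_one_iff, not_lt] at hcon
        have hz0 : (0 : ℝ) < ‖z i‖ := lt_of_lt_of_le hp0 hcon
        have h1 : (1 : ℝ) < q i * ‖z i‖ := by
          calc (1 : ℝ) = (p : ℝ)⁻¹ * p := (inv_mul_cancel₀ hp0.ne').symm
            _ ≤ (p : ℝ)⁻¹ * ‖z i‖ := mul_le_mul_of_nonneg_left hcon hpinv0.le
            _ < q i * ‖z i‖ := mul_lt_mul_of_pos_right (hq₁ i) hz0
        have := hq₂ j
        linarith
      · rw [if_neg hij, padic_norm_le_inv_iff]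
        by_contra hcon
        push_neg at hcon
        have hji : q j < q i := hmono (by omega : j < i)
        nlinarith [hq0 i]
  · ext z
    simp only [ballB, padicN, Set.mem_setOf_eq]
    set m : Fin d := ⟨d - 1, Nat.sub_lt hd one_pos⟩ with hm
    constructor
    · intro h
      apply ciSup_le
      intro i
      have hi := h i
      rw [if_neg (by omega)] at hi
      have hqm : q i ≤ q m := hmono.monotone (by simp [hm, Fin.le_def]; omega)
      rw [div_eq_mul_inv]
      calc q i * ‖z i‖ ≤ q i * (p : ℝ)⁻¹ := by
            exact mul_le_mul_of_nonneg_left hi (hq0 i).le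
        _ ≤ q m * (p : ℝ)⁻¹ := by
            exact mul_le_mul_of_nonneg_right hqm hpinv0.le
    · intro h i
      rw [if_neg (by omega), padic_norm_le_inv_iff]
      have hle : q i * ‖z i‖ ≤ q m / p := le_trans (le_ciSup (hbdd z) i) h
      by_contra hcon
      push_neg at hcon
      have h1 : q i ≤ q i * ‖z i‖ := by nlinarith [hq0 i]
      have h2 : q m / p ≤ (p : ℝ)⁻¹ := by
        rw [div_eq_mul_inv]
        nlinarith [hq₂ m]
      linarith [hq₁ i]
  · intro j hj
    constructor
    · intro z hz i
      have hi := hz i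
      by_cases h : (i : ℕ) < j
      · rw [if_pos h] at hi
        rw [if_pos (by omega)]
        exact hi
      · rw [if_neg h] at hi
        by_cases h' : (i : ℕ) < j + 1
        · rw [if_pos h']
          exact le_trans hi hpinv.le
        · rw [if_neg h']
          exact hi
    · intro hsub
      have hz : (fun i : Fin d => if (i : ℕ) = j then (1 : ℚ_[p]) else 0) ∈
          ballB p d (j + 1) := by
        intro i
        by_cases h : (i : ℕ) = j
        · simp [h, hj]
        · simp [h, hpinv0.le]
      have := hsub hz
      have h2 := this ⟨j, hj⟩
      simp at h2
      linarith
end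

section
/- With notation as in Lemma 1 (maximal chain pL = L₀ ⊂ ... ⊂ L_d = L of lattices and f_j ∈ L_j \ L_{j-1}), each lattice L_j has the form L_j = ℤ_p f₁ ⊕ ... ⊕ ℤ_p f_j ⊕ pℤ_p f_{j+1} ⊕ ... ⊕ pℤ_p f_d. -/
/-- A lattice in `ℚ_p^d`: the `ℤ_p`-span of a `ℚ_p`-basis (equivalently, an open
compact `ℤ_p`-submodule, i.e. a free `ℤ_p`-submodule of rank `d`). -/
def IsLattice (p : ℕ) [Fact p.Prime] {d : ℕ}
    (L : Submodule ℤ_[p] (Fin d → ℚ_[p])) : Prop :=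
  ∃ e : Module.Basis (Fin d) ℚ_[p] (Fin d → ℚ_[p]),
    L = Submodule.span ℤ_[p] (Set.range (⇑e))

/-- The scaled lattice `pL`. -/
noncomputable def pScale (p : ℕ) [Fact p.Prime] {d : ℕ}
    (L : Submodule ℤ_[p] (Fin d → ℚ_[p])) : Submodule ℤ_[p] (Fin d → ℚ_[p]) :=
  Submodule.map ((p : ℤ_[p]) • (LinearMap.id : (Fin d → ℚ_[p]) →ₗ[ℤ_[p]] (Fin d → ℚ_[p]))) L

section aux
variable {p : ℕ} [Fact p.Prime] {d : ℕ}


lemma IsLattice.fg {L : Submodule ℤ_[p] (Fin d → ℚ_[p])} (h : IsLattice p L) : L.FG := by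
  obtain ⟨e, rfl⟩ := h
  exact Submodule.fg_span (Set.finite_range _)

lemma IsLattice.span_top {L : Submodule ℤ_[p] (Fin d → ℚ_[p])} (h : IsLattice p L) :
    Submodule.span ℚ_[p] (L : Set (Fin d → ℚ_[p])) = ⊤ := by
  obtain ⟨e, rfl⟩ := h
  refine top_le_iff.mp ?_
  rw [← e.span_eq]
  exact Submodule.span_mono Submodule.subset_span

lemma isLattice_sandwich {L M L' : Submodule ℤ_[p] (Fin d → ℚ_[p])}
    (hL : IsLattice p L) (hL' : IsLattice p L') (h1 : L ≤ M) (h2 : M ≤ L') :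
    IsLattice p M := by
  obtain ⟨e, he⟩ := hL'
  have hind : LinearIndependent ℤ_[p] ⇑e :=
    e.linearIndependent.restrict_scalars (smul_left_injective ℤ_[p] one_ne_zero)
  obtain ⟨m, bM⟩ := Submodule.basisOfPidOfLESpan hind (he ▸ h2)
  have hspanM : Submodule.span ℤ_[p] (Set.range (⇑M.subtype ∘ ⇑bM)) = M := by
    have h := congrArg (Submodule.map M.subtype) bM.span_eq
    rwa [Submodule.map_span, ← Set.range_comp, Submodule.map_subtype_top] at h
  have hliv : LinearIndependent ℤ_[p] (⇑M.subtype ∘ ⇑bM) :=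
    bM.linearIndependent.map' M.subtype (Submodule.ker_subtype M)
  have hsp : Submodule.span ℚ_[p] (Set.range (⇑M.subtype ∘ ⇑bM)) = ⊤ := by
    rw [← top_le_iff, ← hL.span_top, Submodule.span_le]
    intro x hx
    have hxM : x ∈ M := h1 hx
    rw [← hspanM] at hxM
    exact Submodule.span_le_restrictScalars ℤ_[p] ℚ_[p] _ hxM
  let B : Module.Basis (Fin m) ℚ_[p] (Fin d → ℚ_[p]) :=
    Module.Basis.mk ((LinearIndependent.iff_fractionRing ℤ_[p] ℚ_[p]).mp hliv) (by rw [hsp])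
  have hm : m = d := by
    have h1 := Module.finrank_eq_card_basis B
    simp [Module.finrank_fin_fun] at h1
    omega
  refine ⟨B.reindex (finCongr hm), ?_⟩
  rw [← hspanM]
  congr 1
  rw [Module.Basis.range_reindex]
  exact (congrArg Set.range (Module.Basis.coe_mk _ _)).symm


lemma smul_coe_eq (x : Fin d → ℚ_[p]) : (p : ℤ_[p]) • x = (p : ℚ_[p]) • x := by
  rw [Nat.cast_smul_eq_nsmul, Nat.cast_smul_eq_nsmul]

end aux

theorem lemma1_lattice_form (p : ℕ) [Fact p.Prime] (d : ℕ)
    (L : Fin (d + 1) → Submodule ℤ_[p] (Fin d → ℚ_[p]))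
    (hlat : ∀ j, IsLattice p (L j))
    (hmono : StrictMono L)
    (h0 : L 0 = pScale p (L (Fin.last d)))
    (hmax : ∀ j : Fin d, ∀ M : Submodule ℤ_[p] (Fin d → ℚ_[p]),
      IsLattice p M → L j.castSucc < M → M < L j.succ → False)
    (f : Fin d → (Fin d → ℚ_[p]))
    (hf : ∀ j : Fin d, f j ∈ L j.succ ∧ f j ∉ L j.castSucc) :
    ∀ j : Fin (d + 1), L j = Submodule.span ℤ_[p]
      (Set.range fun i : Fin d =>
        if (i : ℕ) < (j : ℕ) then f i else (p : ℚ_[p]) • f i) := by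
  -- step: L j.succ = L j.castSucc ⊔ span {f j}
  have hstep : ∀ j : Fin d, L j.succ = L j.castSucc ⊔ Submodule.span ℤ_[p] {f j} := by
    intro j
    set M := L j.castSucc ⊔ Submodule.span ℤ_[p] {f j} with hM
    have hle : M ≤ L j.succ := sup_le (hmono (Fin.castSucc_lt_succ (i := j))).le
      ((Submodule.span_singleton_le_iff_mem _ _).mpr (hf j).1)
    have hlt : L j.castSucc < M := lt_of_le_of_ne le_sup_left (fun h => (hf j).2
      (h ▸ Submodule.mem_sup_right (Submodule.mem_span_singleton_self _)))
    rcases hle.lt_or_eq with h | h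
    · exact absurd h (fun h =>
        hmax j M (isLattice_sandwich (hlat _) (hlat _) hlt.le hle) hlt h)
    · exact h.symm
  -- cumulative form
  have claim : ∀ n (hn : n ≤ d), L ⟨n, by omega⟩ =
      L 0 ⊔ Submodule.span ℤ_[p] (f '' {i : Fin d | (i : ℕ) < n}) := by
    intro n
    induction n with
    | zero =>
      intro _
      have : {i : Fin d | (i : ℕ) < 0} = ∅ := by ext i; simp
      simp [this]
    | succ n ih =>
      intro hn
      have hn' : n ≤ d := by omega
      have h1 : L ⟨n + 1, by omega⟩ = L (⟨n, by omega⟩ : Fin d).castSucc ⊔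
          Submodule.span ℤ_[p] {f ⟨n, by omega⟩} := hstep ⟨n, by omega⟩
      have hset : f '' {i : Fin d | (i : ℕ) < n + 1} =
          f '' {i : Fin d | (i : ℕ) < n} ∪ {f ⟨n, by omega⟩} := by
        have hseteq : {i : Fin d | (i : ℕ) < n + 1} =
            {i : Fin d | (i : ℕ) < n} ∪ {(⟨n, by omega⟩ : Fin d)} := by
          ext i
          constructor
          · intro h
            rcases Nat.lt_succ_iff_lt_or_eq.mp h with h | h
            · exact Or.inl h
            · exact Or.inr (Fin.ext h)
          · rintro (h | rfl)
            · exact Nat.lt_succ_of_lt h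
            · exact Nat.lt_succ_self n
        rw [hseteq, Set.image_union, Set.image_singleton]
      rw [h1, show ((⟨n, by omega⟩ : Fin d).castSucc : Fin (d+1)) = ⟨n, by omega⟩ from rfl, ih hn', hset,
        Submodule.span_union, sup_assoc]
  -- Nakayama: L last = span (range f)
  have hlast : L (Fin.last d) = L 0 ⊔ Submodule.span ℤ_[p] (Set.range f) := by
    have := claim d le_rfl
    have hset : f '' {i : Fin d | (i : ℕ) < d} = Set.range f := by
      rw [show {i : Fin d | (i : ℕ) < d} = Set.univ from by ext i; simp [i.isLt],
        Set.image_univ]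
    rwa [hset] at this
  have hLd : L (Fin.last d) = Submodule.span ℤ_[p] (Set.range f) := by
    have hsub : Submodule.span ℤ_[p] (Set.range f) ≤ L (Fin.last d) := by
      rw [Submodule.span_le]
      rintro _ ⟨i, rfl⟩
      exact hmono.monotone (Fin.le_last _) (hf i).1
    refine le_antisymm ?_ hsub
    have h0le : L 0 ≤ Ideal.span {(p : ℤ_[p])} • L (Fin.last d) := by
      rw [h0, pScale]
      rintro x ⟨y, hy, rfl⟩
      exact Submodule.smul_mem_smul (Ideal.mem_span_singleton_self _) hy
    refine Submodule.le_of_le_smul_of_le_jacobson_bot (I := Ideal.span {(p : ℤ_[p])})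
      (hlat (Fin.last d)).fg ?_ ?_
    · rw [IsLocalRing.jacobson_eq_maximalIdeal ⊥ bot_ne_top,
        PadicInt.maximalIdeal_eq_span_p]
    · exact hlast.trans_le (sup_le (le_sup_of_le_right h0le) le_sup_left)
  -- L 0 = span of p • f
  have hL0 : L 0 = Submodule.span ℤ_[p] (Set.range fun i => (p : ℚ_[p]) • f i) := by
    rw [h0, pScale, hLd, Submodule.map_span, ← Set.range_comp]
    exact congrArg (fun g => Submodule.span ℤ_[p] (Set.range g))
      (funext fun i => smul_coe_eq (f i))
  -- final
  intro j
  have hj : (j : ℕ) ≤ d := by omega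
  have := claim j hj
  rw [show (⟨(j : ℕ), by omega⟩ : Fin (d+1)) = j from Fin.ext rfl] at this
  rw [this, hL0, ← Submodule.span_union]
  apply le_antisymm
  · rw [Submodule.span_le]
    rintro x (⟨i, rfl⟩ | ⟨i, hi, rfl⟩)
    · by_cases h : (i : ℕ) < (j : ℕ)
      · have heq : (fun i => (p : ℚ_[p]) • f i) i = (p : ℤ_[p]) • f i := (smul_coe_eq _).symm
        rw [heq]
        exact Submodule.smul_mem _ _ (Submodule.subset_span ⟨i, by simp [h]⟩)
      · exact Submodule.subset_span ⟨i, by simp [h]⟩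
    · have hi' : (i : ℕ) < (j : ℕ) := hi
      exact Submodule.subset_span ⟨i, by simp [hi']⟩
  · rw [Submodule.span_le]
    rintro _ ⟨i, rfl⟩
    by_cases h : (i : ℕ) < (j : ℕ)
    · simp only [h, if_true]
      exact Submodule.subset_span (Or.inr ⟨i, h, rfl⟩)
    · simp only [h, if_false]
      exact Submodule.subset_span (Or.inl ⟨i, rfl⟩)
end

section
/- The function N of Lemma 2 is a norm on ℚ_p^d: it is nondegenerate, satisfies N(ax) = |a|_p N(x) for all a ∈ ℚ_p, and satisfies the strong triangle inequality. -/
theorem lemma2_norm_is_norm (p : ℕ) [Fact p.Prime] (d : ℕ)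
    (L : Fin (d + 1) → Submodule ℤ_[p] (Fin d → ℚ_[p]))
    (hlat : ∀ j, IsLattice p (L j))
    (hmono : StrictMono L)
    (h0 : L 0 = pScale p (L (Fin.last d)))
    (hmax : ∀ j : Fin d, ∀ M : Submodule ℤ_[p] (Fin d → ℚ_[p]),
      IsLattice p M → L j.castSucc < M → M < L j.succ → False)
    (q : Fin d → ℝ) (hq₁ : ∀ i, (p : ℝ)⁻¹ < q i) (hq₂ : ∀ i, q i ≤ 1)
    (hqmono : StrictMono q)
    (N : (Fin d → ℚ_[p]) → ℝ)
    (hN0 : N 0 = 0)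
    (hNq : ∀ j : Fin d, ∀ x, x ∈ L j.succ → x ∉ L j.castSucc → N x = q j)
    (hNext : ∀ (k : ℤ) (x : Fin d → ℚ_[p]),
      N (((p : ℚ_[p]) ^ k) • x) = (p : ℝ) ^ (-k) * N x) :
    (∀ x, N x = 0 ↔ x = 0) ∧
    (∀ (a : ℚ_[p]) (x : Fin d → ℚ_[p]), N (a • x) = ‖a‖ * N x) ∧
    (∀ x y, N (x + y) ≤ max (N x) (N y)) := by
  have hp1 : (1:ℝ) < (p:ℝ) := by exact_mod_cast (Fact.out : p.Prime).one_lt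
  have hp0 : (0:ℝ) < (p:ℝ) := lt_trans one_pos hp1
  set P : ℚ_[p] := (p : ℚ_[p]) with hPdef
  have hP0 : P ≠ 0 := by
    simpa [hPdef] using (Nat.cast_ne_zero (R := ℚ_[p])).2 (Fact.out : p.Prime).ne_zero
  have hnormP : ∀ k : ℤ, ‖P ^ k‖ = (p:ℝ) ^ (-k) := fun k => Padic.norm_p_zpow k
  have hq0 : ∀ j, 0 < q j := fun j => lt_trans (inv_pos.2 hp0) (hq₁ j)
  -- coercion of the ℤ_[p]-scalar action
  have hsmulcoe : ∀ (c : ℤ_[p]) (x : Fin d → ℚ_[p]), c • x = ((c : ℚ_[p]) • x) := by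
    intro c x
    rw [← PadicInt.algebraMap_apply, algebraMap_smul]
  -- closure of each lattice under multiplication by nonnegative powers of p
  have hclos : ∀ (i : Fin (d+1)) (m : ℤ), 0 ≤ m → ∀ z ∈ L i, P ^ m • z ∈ L i := by
    intro i m hm z hz
    have hmn : m = (m.toNat : ℤ) := (Int.toNat_of_nonneg hm).symm
    have : P ^ m • z = ((p ^ m.toNat : ℤ_[p])) • z := by
      rw [hsmulcoe]
      congr 1
      rw [PadicInt.coe_pow, PadicInt.coe_natCast, ← hPdef, hmn, zpow_natCast]
      congr 1
    rw [this]
    exact Submodule.smul_mem _ _ hz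
  -- membership in the top lattice via basis coordinates
  obtain ⟨e, he⟩ := hlat (Fin.last d)
  have hmemtop : ∀ x, x ∈ L (Fin.last d) ↔ ∀ i, ‖e.repr x i‖ ≤ 1 := by
    intro x
    rw [he, Module.Basis.mem_span_iff_repr_mem]
    constructor
    · intro h i
      obtain ⟨c, hc⟩ := h i
      rw [← hc, PadicInt.algebraMap_apply]
      exact c.norm_le_one
    · intro h i
      exact ⟨⟨e.repr x i, h i⟩, PadicInt.algebraMap_apply _⟩
  have hrep : ∀ (k : ℤ) (x : Fin d → ℚ_[p]) (i : Fin d),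
      ‖e.repr (P ^ k • x) i‖ = (p:ℝ)^(-k) * ‖e.repr x i‖ := by
    intro k x i
    rw [map_smul, Finsupp.smul_apply, smul_eq_mul, norm_mul, hnormP]
  -- existence of a minimal exponent
  have exists_min : ∀ x : Fin d → ℚ_[p], x ≠ 0 →
      ∃ k : ℤ, P ^ k • x ∈ L (Fin.last d) ∧ P ^ k • x ∉ L 0 ∧
        ∀ m : ℤ, P ^ m • x ∈ L (Fin.last d) → k ≤ m := by
    intro x hx
    obtain ⟨i0, hi0⟩ : ∃ i, e.repr x i ≠ 0 := by
      by_contra hcon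
      push_neg at hcon
      apply hx
      have : e.repr x = 0 := Finsupp.ext fun i => hcon i
      simpa [this] using (e.linearCombination_repr x).symm
    -- boundedness below
    obtain ⟨b, hb⟩ : ∃ b : ℤ, ∀ m : ℤ, P ^ m • x ∈ L (Fin.last d) → b ≤ m := by
      refine ⟨-(e.repr x i0).valuation, ?_⟩
      intro m hm
      have h1 : ‖e.repr (P ^ m • x) i0‖ ≤ 1 := (hmemtop _).1 hm i0
      rw [hrep, Padic.norm_eq_zpow_neg_valuation hi0, ← zpow_add₀ (ne_of_gt hp0)] at h1
      have h2 : -m + -(e.repr x i0).valuation ≤ 0 := by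
        by_contra hcon
        push_neg at hcon
        exact absurd h1 (not_le.2 (one_lt_zpow₀ hp1 hcon))
      omega
    -- nonemptiness
    obtain ⟨K, hK⟩ : ∃ K : ℤ, P ^ K • x ∈ L (Fin.last d) := by
      have hn : ∀ i : Fin d, ∃ n : ℕ, ‖e.repr x i‖ ≤ (p:ℝ)^(n:ℤ) := by
        intro i
        rcases eq_or_ne (e.repr x i) 0 with h | h
        · exact ⟨0, by simp [h]⟩
        · refine ⟨(-(e.repr x i).valuation).toNat, ?_⟩
          rw [Padic.norm_eq_zpow_neg_valuation h]
          exact zpow_le_zpow_right₀ hp1.le (Int.self_le_toNat _)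
      choose n hn using hn
      refine ⟨(Finset.univ.sup n : ℕ), (hmemtop _).2 fun i => ?_⟩
      rw [hrep]
      have h1 : ‖e.repr x i‖ ≤ (p:ℝ)^((Finset.univ.sup n : ℕ) : ℤ) :=
        le_trans (hn i) (zpow_le_zpow_right₀ hp1.le
          (by exact_mod_cast Finset.le_sup (Finset.mem_univ i)))
      calc (p:ℝ)^(-((Finset.univ.sup n : ℕ) : ℤ)) * ‖e.repr x i‖
          ≤ (p:ℝ)^(-((Finset.univ.sup n : ℕ) : ℤ)) * (p:ℝ)^(((Finset.univ.sup n : ℕ)) : ℤ) :=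
            mul_le_mul_of_nonneg_left h1 (zpow_pos hp0 _).le
        _ = 1 := by rw [← zpow_add₀ (ne_of_gt hp0)]; simp
    obtain ⟨k, hk, hkmin⟩ := Int.exists_least_of_bdd ⟨b, hb⟩ ⟨K, hK⟩
    refine ⟨k, hk, ?_, hkmin⟩
    intro hcon
    rw [h0, pScale] at hcon
    obtain ⟨y, hy, hyx⟩ := hcon
    simp only [LinearMap.smul_apply, LinearMap.id_coe, id_eq] at hyx
    rw [hsmulcoe] at hyx
    have hyx' : P • y = P ^ k • x := by
      rw [← hyx]; congr 1
    have hy' : y = P ^ (k - 1) • x := by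
      have := congrArg (fun w => P⁻¹ • w) hyx'
      simp only [smul_smul, inv_mul_cancel₀ hP0, one_smul] at this
      rw [this, zpow_sub_one₀ hP0, mul_comm, mul_smul]
    rw [hy'] at hy
    have := hkmin (k - 1) hy
    omega
  -- locating the layer of an element of L_d \ L_0
  have find_j : ∀ z : Fin d → ℚ_[p], z ∈ L (Fin.last d) → z ∉ L 0 →
      ∃ j : Fin d, z ∈ L j.succ ∧ z ∉ L j.castSucc := by
    intro z hz hz0
    by_contra hcon
    push_neg at hcon
    have : ∀ i : Fin (d+1), z ∉ L i := by
      intro i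
      induction i using Fin.induction with
      | zero => exact hz0
      | succ j ih => exact fun h => ih (hcon j h)
    exact this _ hz
  -- canonical form
  have canon : ∀ x : Fin d → ℚ_[p], x ≠ 0 →
      ∃ (k : ℤ) (j : Fin d), P ^ k • x ∈ L j.succ ∧ P ^ k • x ∉ L j.castSucc ∧
        N x = (p:ℝ) ^ k * q j ∧ ∀ m : ℤ, P ^ m • x ∈ L (Fin.last d) → k ≤ m := by
    intro x hx
    obtain ⟨k, hk1, hk2, hk3⟩ := exists_min x hx
    obtain ⟨j, hj1, hj2⟩ := find_j _ hk1 hk2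
    refine ⟨k, j, hj1, hj2, ?_, hk3⟩
    have h1 : N (P ^ k • x) = q j := hNq j _ hj1 hj2
    have h2 := hNext k x
    rw [hPdef] at h1
    rw [h1] at h2
    have : (p:ℝ) ^ k * ((p:ℝ) ^ (-k) * N x) = (p:ℝ) ^ k * q j := by rw [← h2]
    rwa [← mul_assoc, ← zpow_add₀ (ne_of_gt hp0), add_neg_cancel, zpow_zero, one_mul] at this
  have Npos : ∀ x : Fin d → ℚ_[p], x ≠ 0 → 0 < N x := by
    intro x hx
    obtain ⟨k, j, -, -, hN, -⟩ := canon x hx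
    rw [hN]
    exact mul_pos (zpow_pos hp0 k) (hq0 j)
  -- the upper bound lemma
  have upper : ∀ (z : Fin d → ℚ_[p]) (k : ℤ) (j : Fin d),
      P ^ k • z ∈ L j.succ → N z ≤ (p:ℝ) ^ k * q j := by
    intro z k j hz
    rcases eq_or_ne z 0 with rfl | hz0
    · rw [hN0]; exact (mul_pos (zpow_pos hp0 k) (hq0 j)).le
    obtain ⟨k0, j0, hc1, hc2, hc3, hc4⟩ := canon z hz0
    have hjtop : L j.succ ≤ L (Fin.last d) := hmono.monotone (Fin.le_last _)
    have hk0k : k0 ≤ k := hc4 k (hjtop hz)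
    rcases eq_or_lt_of_le hk0k with rfl | hlt
    · -- k0 = k : compare layers
      have hj0j : j0 ≤ j := by
        by_contra hcon
        push_neg at hcon
        have hle : j.succ ≤ j0.castSucc := by
          rw [Fin.le_def]; rw [Fin.lt_def] at hcon
          simp only [Fin.val_succ, Fin.coe_castSucc]; omega
        exact hc2 (hmono.monotone hle hz)
      rw [hc3]
      exact mul_le_mul_of_nonneg_left (hqmono.monotone hj0j) (zpow_pos hp0 _).le
    · -- k0 < k
      rw [hc3]
      calc (p:ℝ) ^ k0 * q j0 ≤ (p:ℝ) ^ k0 * 1 :=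
            mul_le_mul_of_nonneg_left (hq₂ j0) (zpow_pos hp0 _).le
        _ = (p:ℝ) ^ k0 := mul_one _
        _ ≤ (p:ℝ) ^ (k - 1) := zpow_le_zpow_right₀ hp1.le (by omega)
        _ = (p:ℝ) ^ k * (p:ℝ)⁻¹ := zpow_sub_one₀ (ne_of_gt hp0) k
        _ ≤ (p:ℝ) ^ k * q j := mul_le_mul_of_nonneg_left (hq₁ j).le (zpow_pos hp0 _).le
  -- key lemma for the ultrametric inequality
  have key : ∀ x y : Fin d → ℚ_[p], x ≠ 0 → y ≠ 0 → N y ≤ N x → N (x + y) ≤ N x := by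
    intro x y hx hy hyx
    obtain ⟨k, j, hx1, hx2, hx3, hx4⟩ := canon x hx
    obtain ⟨k', j', hy1, hy2, hy3, hy4⟩ := canon y hy
    rw [hx3, hy3] at hyx
    -- k' ≤ k
    have hk'k : k' ≤ k := by
      by_contra hcon
      push_neg at hcon
      have h1 : (p:ℝ) ^ k * q j ≤ (p:ℝ) ^ k :=
        (mul_le_mul_of_nonneg_left (hq₂ j) (zpow_pos hp0 _).le).trans_eq (mul_one _)
      have h2 : (p:ℝ) ^ k ≤ (p:ℝ) ^ (k' - 1) := zpow_le_zpow_right₀ hp1.le (by omega)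
      have h3 : (p:ℝ) ^ (k' - 1) < (p:ℝ) ^ k' * q j' := by
        rw [zpow_sub_one₀ (ne_of_gt hp0)]
        exact mul_lt_mul_of_pos_left (hq₁ j') (zpow_pos hp0 k')
      linarith
    -- P ^ k • y ∈ L j.succ
    have hymem : P ^ k • y ∈ L j.succ := by
      rcases eq_or_lt_of_le hk'k with rfl | hlt
      · -- same exponent: compare q values
        have hq : q j' ≤ q j := le_of_mul_le_mul_left (by linarith [hyx]) (zpow_pos hp0 k')
        have hjj : j' ≤ j := by
          by_contra hcon
          push_neg at hcon
          exact absurd hq (not_le.2 (hqmono hcon))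
        have : L j'.succ ≤ L j.succ := hmono.monotone (by
          rw [Fin.le_def]; rw [Fin.le_def] at hjj
          simp only [Fin.val_succ]; omega)
        exact this hy1
      · -- strictly smaller exponent: go through L 0
        have hy1' : P ^ k' • y ∈ L (Fin.last d) := hmono.monotone (Fin.le_last _) hy1
        have hstep : P • (P ^ k' • y) ∈ L 0 := by
          rw [h0, pScale]
          refine ⟨P ^ k' • y, hy1', ?_⟩
          simp only [LinearMap.smul_apply, LinearMap.id_coe, id_eq]
          rw [hsmulcoe]
          congr 1
        have hstep' : P • (P ^ k' • y) ∈ L j.succ := hmono.monotone (Fin.zero_le _) hstep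
        have := hclos j.succ (k - k' - 1) (by omega) _ hstep'
        have heq : P ^ (k - k' - 1) • P • P ^ k' • y = P ^ k • y := by
          rw [smul_smul, smul_smul]
          congr 1
          rw [← zpow_add_one₀ hP0, ← zpow_add₀ hP0]
          congr 1
          omega
        rwa [heq] at this
    have hsum : P ^ k • (x + y) ∈ L j.succ := by
      rw [smul_add]
      exact Submodule.add_mem _ hx1 hymem
    rw [hx3]
    exact upper _ k j hsum
  refine ⟨?_, ?_, ?_⟩
  · -- nondegeneracy
    intro x
    constructor
    · intro h
      by_contra hx
      exact absurd h (ne_of_gt (Npos x hx))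
    · rintro rfl; exact hN0
  · -- homogeneity
    have unit_inv : ∀ u : ℚ_[p], ‖u‖ = 1 → ∀ x, N (u • x) = N x := by
      intro u hu x
      rcases eq_or_ne x 0 with rfl | hx
      · rw [smul_zero]
      have hu0 : u ≠ 0 := by intro h; rw [h, norm_zero] at hu; norm_num at hu
      have hmemiff : ∀ (w : ℚ_[p]), ‖w‖ = 1 → ∀ (i : Fin (d+1)) (z : Fin d → ℚ_[p]),
          z ∈ L i → w • z ∈ L i := by
        intro w hw i z hz
        have h' := Submodule.smul_mem (L i) (⟨w, le_of_eq hw⟩ : ℤ_[p]) hz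
        have h'' := hsmulcoe ⟨w, le_of_eq hw⟩ z
        convert h' using 1; exact h''.symm
      obtain ⟨k, j, h1, h2, h3, -⟩ := canon x hx
      have hcomm : P ^ k • (u • x) = u • (P ^ k • x) := smul_comm _ _ _
      have hm1 : P ^ k • (u • x) ∈ L j.succ := by
        rw [hcomm]; exact hmemiff u hu _ _ h1
      have hm2 : P ^ k • (u • x) ∉ L j.castSucc := by
        rw [hcomm]
        intro hcon
        apply h2
        have hui : ‖u⁻¹‖ = 1 := by rw [norm_inv, hu]; norm_num
        have h' := hmemiff u⁻¹ hui j.castSucc _ hcon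
        rwa [smul_smul, inv_mul_cancel₀ hu0, one_smul] at h'
      have h4 : N (P ^ k • (u • x)) = q j := hNq j _ hm1 hm2
      have h5 := hNext k (u • x)
      rw [h4] at h5
      rw [h3]
      have : (p:ℝ) ^ k * ((p:ℝ)^(-k) * N (u • x)) = (p:ℝ) ^ k * q j := by rw [← h5]
      rw [← mul_assoc, ← zpow_add₀ (ne_of_gt hp0), add_neg_cancel, zpow_zero, one_mul] at this
      rw [this]
    intro a x
    rcases eq_or_ne a 0 with rfl | ha
    · rw [zero_smul, hN0, norm_zero, zero_mul]
    set v := a.valuation with hv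
    set u := a * P ^ (-v) with hudef
    have hu : ‖u‖ = 1 := by
      rw [hudef, norm_mul, hnormP, Padic.norm_eq_zpow_neg_valuation ha, ← hv, neg_neg,
        ← zpow_add₀ (ne_of_gt hp0), neg_add_cancel, zpow_zero]
    have hax : a • x = P ^ v • (u • x) := by
      rw [smul_smul, hudef]
      congr 1
      rw [mul_comm a, ← mul_assoc, ← zpow_add₀ hP0, add_neg_cancel, zpow_zero, one_mul]
    rw [hax]
    rw [hNext v (u • x), unit_inv u hu, Padic.norm_eq_zpow_neg_valuation ha]
  · -- ultrametric inequality
    intro x y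
    rcases eq_or_ne x 0 with rfl | hx
    · rw [zero_add]; exact le_max_right _ _
    rcases eq_or_ne y 0 with rfl | hy
    · rw [add_zero]; exact le_max_left _ _
    rcases le_total (N y) (N x) with h | h
    · exact le_trans (key x y hx hy h) (le_max_left _ _)
    · rw [add_comm]
      exact le_trans (key y x hy hx h) (le_max_right _ _)
end

section
/- Every closed ball B containing 0 with respect to the norm N^A_{q₁,...,q_d}(z) = max_i qᵢ|(Az)ᵢ|_p (with A ∈ GL_d(ℚ_p) and p⁻¹ < qᵢ ≤ 1) is a lattice in ℚ_p^d, i.e. an open compact ℤ_p-submodule of rank d. -/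
open Matrix

variable {p : ℕ} [Fact p.Prime]

private lemma hp1R : (1:ℝ) < (p:ℝ) :=
  Nat.one_lt_cast.mpr (Fact.out : p.Prime).one_lt

private lemma scale_norm_iff (c : ℤ) (x : ℚ_[p]) :
    ‖(p : ℚ_[p]) ^ c * x‖ ≤ 1 ↔ ‖x‖ ≤ (p : ℝ) ^ c := by
  have hp0 : (0:ℝ) < p := zero_lt_one.trans hp1R
  have hp : (0:ℝ) < (p:ℝ) ^ c := zpow_pos hp0 _
  rw [norm_mul, norm_zpow, Padic.norm_p, _root_.inv_zpow,
    inv_mul_le_iff₀ hp, mul_one]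

private lemma key_iff {q r : ℝ} (hq : 0 < q) (hr : 0 < r) (x : ℚ_[p]) :
    q * ‖x‖ ≤ r ↔ ‖x‖ ≤ (p : ℝ) ^ (Int.log p (r / q)) := by
  rcases eq_or_ne x 0 with rfl | hx
  · simp only [norm_zero, mul_zero]
    exact ⟨fun _ => le_of_lt (zpow_pos (zero_lt_one.trans hp1R) _), fun _ => hr.le⟩
  · rw [Padic.norm_eq_zpow_neg_valuation hx]
    rw [mul_comm, ← le_div_iff₀ hq,
      Int.zpow_le_iff_le_log (Fact.out : p.Prime).one_lt (div_pos hr hq),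
      ← zpow_le_zpow_iff_right₀ (hp1R (p := p))]



/-- The rotated norm `N^A_{q₁,…,q_d}(z) = max_i qᵢ |(Az)ᵢ|_p`. -/
noncomputable def padicNA (p : ℕ) [Fact p.Prime] {d : ℕ} (q : Fin d → ℝ)
    (A : Matrix (Fin d) (Fin d) ℚ_[p]) (z : Fin d → ℚ_[p]) : ℝ :=
  ⨆ i, q i * ‖A.mulVec z i‖

theorem ball_of_rotated_norm_is_lattice (p : ℕ) [Fact p.Prime] (d : ℕ)
    (q : Fin d → ℝ) (hq : ∀ i, (p : ℝ)⁻¹ < q i ∧ q i ≤ 1)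
    (A : Matrix (Fin d) (Fin d) ℚ_[p]) (hA : IsUnit A)
    (r : ℝ) (hr : 0 < r) :
    ∃ L : Submodule ℤ_[p] (Fin d → ℚ_[p]),
      IsLattice p L ∧
      (L : Set (Fin d → ℚ_[p])) = {z | padicNA p q A z ≤ r} ∧
      IsOpen (L : Set (Fin d → ℚ_[p])) ∧
      IsCompact (L : Set (Fin d → ℚ_[p])) := by
  classical
  have hq0 : ∀ i, 0 < q i := fun i =>
    lt_trans (inv_pos.mpr (zero_lt_one.trans (hp1R (p := p)))) (hq i).1
  set c : Fin d → ℤ := fun i => Int.log p (r / q i) with hcdef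
  set D : Matrix (Fin d) (Fin d) ℚ_[p] := Matrix.diagonal fun i => (p:ℚ_[p]) ^ (c i) with hDdef
  have hpQ : (p : ℚ_[p]) ≠ 0 := Nat.cast_ne_zero.mpr (Fact.out : p.Prime).pos.ne'
  have hD : IsUnit D := by
    rw [Matrix.isUnit_iff_isUnit_det, Matrix.det_diagonal]
    exact isUnit_iff_ne_zero.mpr (Finset.prod_ne_zero_iff.mpr fun i _ => zpow_ne_zero _ hpQ)
  have hB : IsUnit (D * A) := hD.mul hA
  let f : (Fin d → ℚ_[p]) ≃ₗ[ℚ_[p]] (Fin d → ℚ_[p]) :=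
    Matrix.toLinearEquiv' (D * A) hB.invertible
  have hfapp : ∀ z, f z = (D * A).mulVec z := fun z => rfl
  have hcoord : ∀ z i, (‖f z i‖ ≤ 1 ↔ q i * ‖A.mulVec z i‖ ≤ r) := by
    intro z i
    rw [hfapp, ← Matrix.mulVec_mulVec, Matrix.mulVec_diagonal,
      scale_norm_iff, ← key_iff (hq0 i) hr]
  have hmem : ∀ z, padicNA p q A z ≤ r ↔ ∀ i, ‖f z i‖ ≤ 1 := by
    intro z
    unfold padicNA
    constructor
    · intro h i
      rw [hcoord]
      exact le_trans (le_ciSup (f := fun i => q i * ‖A.mulVec z i‖) (Set.Finite.bddAbove (Set.finite_range _)) i) h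
    · intro h
      exact Real.iSup_le (fun i => (hcoord z i).mp (h i)) hr.le
  set e : Module.Basis (Fin d) ℚ_[p] (Fin d → ℚ_[p]) := (Pi.basisFun ℚ_[p] (Fin d)).map f.symm with he
  have hsum : ∀ g : Fin d → ℤ_[p],
      (∑ i, g i • e i) = f.symm (fun j => (g j : ℚ_[p])) := by
    intro g
    have h1 : ∀ i, g i • e i = f.symm ((g i : ℚ_[p]) • (Pi.single i 1 : Fin d → ℚ_[p])) := by
      intro i
      rw [he, Module.Basis.map_apply, Pi.basisFun_apply, LinearEquiv.map_smul,
        ← PadicInt.algebraMap_apply, algebraMap_smul]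
    have h2 : (∑ i, ((g i : ℚ_[p])) • (Pi.single i 1 : Fin d → ℚ_[p])) = fun j => (g j : ℚ_[p]) := by
      funext j
      simp [Finset.sum_apply, Pi.single_apply]
    rw [Finset.sum_congr rfl fun i _ => h1 i, ← map_sum, h2]
  have hLmem : ∀ z, z ∈ Submodule.span ℤ_[p] (Set.range ⇑e) ↔ ∀ i, ‖f z i‖ ≤ 1 := by
    intro z
    rw [Submodule.mem_span_range_iff_exists_fun]
    constructor
    · rintro ⟨g, hg⟩ i
      rw [hsum] at hg
      have hz : f z = fun j => (g j : ℚ_[p]) := by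
        rw [← hg, LinearEquiv.apply_symm_apply]
      rw [hz]
      exact (g i).2
    · intro h
      refine ⟨fun i => (⟨f z i, h i⟩ : ℤ_[p]), ?_⟩
      refine (hsum _).trans ?_
      exact f.symm_apply_apply z
  have hC : {x : ℚ_[p] | ‖x‖ ≤ 1} = Metric.ball (0:ℚ_[p]) p := by
    ext x
    simp only [Metric.mem_ball, dist_zero_right, Set.mem_setOf_eq]
    have := Padic.norm_le_pow_iff_norm_lt_pow_add_one x 0
    simpa using this
  have hiso : Isometry ((↑) : ℤ_[p] → ℚ_[p]) :=
    AddMonoidHomClass.isometry_of_norm (PadicInt.Coe.ringHom) fun x => rfl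
  have hCc : IsCompact {x : ℚ_[p] | ‖x‖ ≤ 1} := by
    have hrange : Set.range ((↑) : ℤ_[p] → ℚ_[p]) = {x : ℚ_[p] | ‖x‖ ≤ 1} :=
      Subtype.range_coe_subtype
    rw [← hrange]
    haveI : CompactSpace {x : ℚ_[p] // ‖x‖ ≤ 1} := PadicInt.compactSpace p
    exact isCompact_range hiso.continuous
  have hpre : (Submodule.span ℤ_[p] (Set.range ⇑e) : Set (Fin d → ℚ_[p])) =
      ⇑f ⁻¹' (Set.univ.pi fun _ : Fin d => {x : ℚ_[p] | ‖x‖ ≤ 1}) := by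
    ext z
    simp [hLmem z, Set.mem_univ_pi]
  have hfc : Continuous f := f.toLinearMap.continuous_of_finiteDimensional
  have hfsc : Continuous f.symm := f.symm.toLinearMap.continuous_of_finiteDimensional
  refine ⟨Submodule.span ℤ_[p] (Set.range ⇑e), ⟨e, rfl⟩, ?_, ?_, ?_⟩
  · ext z
    simp only [SetLike.mem_coe, Set.mem_setOf_eq, hLmem z, hmem z]
  · rw [hpre]
    exact (isOpen_set_pi Set.finite_univ fun i _ => hC ▸ Metric.isOpen_ball).preimage hfc
  · have himg : (Submodule.span ℤ_[p] (Set.range ⇑e) : Set (Fin d → ℚ_[p])) =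
        ⇑f.symm '' (Set.univ.pi fun _ : Fin d => {x : ℚ_[p] | ‖x‖ ≤ 1}) := by
      rw [hpre]
      ext z
      constructor
      · intro hz
        exact ⟨f z, hz, f.symm_apply_apply z⟩
      · rintro ⟨w, hw, rfl⟩
        simpa [f.apply_symm_apply] using hw
    rw [himg]
    exact (isCompact_univ_pi fun i => hCc).image hfsc
end
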